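/- arXiv:1905.12718 — 2 statements merged into one kernel-verified Lean document; each statement's English description precedes it below -/
import Mathlib

section
/- Fix α ∈ (0,1), ρ ∈ 𝒞 and P ∈ 𝒫^ρ. Then the order-α M-quantile θ^ρ_α(P) = inf{θ ∈ ℝ : G^ρ(θ) ≥ α} is a real number and is a global minimizer of θ ↦ O^ρ(θ) over ℝ, i.e. O^ρ(θ^ρ_α(P)) ≤ O^ρ(θ) for every θ ∈ ℝ. -/
open MeasureTheory Set Filter

noncomputable section

/-- The class `𝒞` of loss functions: convex, nonnegative, even, vanishing only at `0`. -/
def LossClass (ρ : ℝ → ℝ) : Prop :=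
  ConvexOn ℝ Set.univ ρ ∧ (∀ t, 0 ≤ ρ t) ∧ (∀ t, ρ (-t) = ρ t) ∧ (∀ t, ρ t = 0 ↔ t = 0)

/-- `ψ` is the left-derivative of `ρ`. -/
def IsLeftDeriv (ρ ψ : ℝ → ℝ) : Prop :=
  ∀ x : ℝ, HasDerivWithinAt ρ (ψ x) (Set.Iio x) x

/-- The asymmetric loss `ρ_α(t) = ((1−α)·𝟙[t<0] + α·𝟙[t>0])·ρ(t)`. -/
def rhoA (ρ : ℝ → ℝ) (α t : ℝ) : ℝ :=
  ((1 - α) * (if t < 0 then 1 else 0) + α * (if 0 < t then 1 else 0)) * ρ t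

/-- The objective function `O^ρ(θ) = E[ρ_α(Z−θ) − ρ_α(Z)]`. -/
def Obj (ρ : ℝ → ℝ) (α : ℝ) (P : Measure ℝ) (θ : ℝ) : ℝ :=
  ∫ z, (rhoA ρ α (z - θ) - rhoA ρ α z) ∂P

/-- `G^ρ(θ) = E[|ψ₋(Z−θ)|·𝟙[Z ≤ θ]] / E[|ψ₋(Z−θ)|]`. -/
def Gfun (ψ : ℝ → ℝ) (P : Measure ℝ) (θ : ℝ) : ℝ :=
  (∫ z, |ψ (z - θ)| * (if z ≤ θ then 1 else 0) ∂P) / ∫ z, |ψ (z - θ)| ∂P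

/-- The order-`α` M-quantile `θ^ρ_α(P) = inf{θ : G^ρ(θ) ≥ α}`. -/
def MQuant (ψ : ℝ → ℝ) (P : Measure ℝ) (α : ℝ) : ℝ :=
  sInf {θ : ℝ | α ≤ Gfun ψ P θ}


open Topology

lemma subgrad {ρ ψ : ℝ → ℝ} (hρ : LossClass ρ) (hψ : IsLeftDeriv ρ ψ) (b a : ℝ) :
    ρ b + ψ b * (a - b) ≤ ρ a := by
  have htend : Tendsto (slope ρ b) (𝓝[Set.Iio b] b) (𝓝 (ψ b)) := by
    have h := (hasDerivWithinAt_iff_tendsto_slope).1 (hψ b)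
    simpa [Set.diff_singleton_eq_self (by simp : b ∉ Set.Iio b)] using h
  rcases lt_trichotomy a b with h | rfl | h
  · have key : (ρ a - ρ b) / (a - b) ≤ ψ b := by
      refine ge_of_tendsto htend ?_
      filter_upwards [self_mem_nhdsWithin,
        mem_nhdsWithin_of_mem_nhds (isOpen_Ioi.mem_nhds h)] with y hy hy'
      rw [slope_def_field]
      exact hρ.1.secant_mono (Set.mem_univ b) (Set.mem_univ a) (Set.mem_univ y)
        (ne_of_lt h) (ne_of_lt hy) (le_of_lt hy')
    have hba : a - b < 0 := by linarith
    have := (div_le_iff_of_neg hba).1 key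
    linarith
  · simp
  · have key : ψ b ≤ (ρ a - ρ b) / (a - b) := by
      refine le_of_tendsto htend ?_
      filter_upwards [self_mem_nhdsWithin] with y hy
      rw [slope_def_field]
      exact hρ.1.secant_mono (Set.mem_univ b) (Set.mem_univ y) (Set.mem_univ a)
        (ne_of_lt hy) (ne_of_gt h) (le_of_lt (lt_trans hy h))
    have hba : 0 < a - b := by linarith
    have := (le_div_iff₀ hba).1 key
    linarith

lemma psi_zero_nonpos {ρ ψ : ℝ → ℝ} (hρ : LossClass ρ) (hψ : IsLeftDeriv ρ ψ) : ψ 0 ≤ 0 := by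
  have htend : Tendsto (slope ρ 0) (𝓝[Set.Iio 0] 0) (𝓝 (ψ 0)) := by
    have h := (hasDerivWithinAt_iff_tendsto_slope).1 (hψ 0)
    simpa [Set.diff_singleton_eq_self (by simp : (0:ℝ) ∉ Set.Iio 0)] using h
  refine le_of_tendsto htend ?_
  filter_upwards [self_mem_nhdsWithin] with y (hy : y < 0)
  rw [slope_def_field]
  have h0 : ρ 0 = 0 := (hρ.2.2.2 0).2 rfl
  rw [h0]
  exact div_nonpos_of_nonneg_of_nonpos (by linarith [hρ.2.1 y]) (by linarith)

noncomputable def psiA (α : ℝ) (ψ : ℝ → ℝ) (u : ℝ) : ℝ := (if u ≤ 0 then (1 - α) else α) * ψ u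


lemma rho_zero {ρ : ℝ → ℝ} (hρ : LossClass ρ) : ρ 0 = 0 := (hρ.2.2.2 0).2 rfl

lemma rhoA_eq {ρ : ℝ → ℝ} (hρ : LossClass ρ) (α t : ℝ) :
    rhoA ρ α t = (if t ≤ 0 then (1 - α) else α) * ρ t := by
  rcases lt_trichotomy t 0 with h | rfl | h
  · simp [rhoA, h, not_lt.2 h.le, h.le]
  · simp [rhoA, rho_zero hρ]
  · simp [rhoA, h, not_lt.2 h.le, not_le.2 h]

lemma psi_mul_self {ρ ψ : ℝ → ℝ} (hρ : LossClass ρ) (hψ : IsLeftDeriv ρ ψ) (u : ℝ) :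
    ρ u ≤ ψ u * u := by
  have h := subgrad hρ hψ u 0
  rw [rho_zero hρ] at h
  nlinarith [h]

lemma psi_mono {ρ ψ : ℝ → ℝ} (hρ : LossClass ρ) (hψ : IsLeftDeriv ρ ψ) : Monotone ψ := by
  intro b c hbc
  rcases eq_or_lt_of_le hbc with rfl | h
  · exact le_rfl
  · have h1 := subgrad hρ hψ b c
    have h2 := subgrad hρ hψ c b
    nlinarith [h1, h2]

lemma psi_neg {ρ ψ : ℝ → ℝ} (hρ : LossClass ρ) (hψ : IsLeftDeriv ρ ψ) {u : ℝ} (hu : u < 0) :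
    ψ u < 0 := by
  have h := psi_mul_self hρ hψ u
  have hρu : 0 < ρ u := lt_of_le_of_ne (hρ.2.1 u) fun he => hu.ne ((hρ.2.2.2 u).1 he.symm)
  nlinarith

lemma psi_pos {ρ ψ : ℝ → ℝ} (hρ : LossClass ρ) (hψ : IsLeftDeriv ρ ψ) {u : ℝ} (hu : 0 < u) :
    0 < ψ u := by
  have h := psi_mul_self hρ hψ u
  have hρu : 0 < ρ u := lt_of_le_of_ne (hρ.2.1 u) fun he => hu.ne' ((hρ.2.2.2 u).1 he.symm)
  nlinarith

lemma psi_nonpos {ρ ψ : ℝ → ℝ} (hρ : LossClass ρ) (hψ : IsLeftDeriv ρ ψ) {u : ℝ} (hu : u ≤ 0) :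
    ψ u ≤ 0 := by
  rcases eq_or_lt_of_le hu with rfl | h
  · exact psi_zero_nonpos hρ hψ
  · exact (psi_neg hρ hψ h).le

lemma subgradA {ρ ψ : ℝ → ℝ} (hρ : LossClass ρ) (hψ : IsLeftDeriv ρ ψ) {α : ℝ}
    (hα : α ∈ Set.Ioo (0:ℝ) 1) (b a : ℝ) :
    rhoA ρ α b + psiA α ψ b * (a - b) ≤ rhoA ρ α a := by
  obtain ⟨hα0, hα1⟩ := hα
  have h1 := subgrad hρ hψ b a
  have hb := psi_mul_self hρ hψ b
  rw [rhoA_eq hρ, rhoA_eq hρ]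
  unfold psiA
  by_cases hbs : b ≤ 0
  · have hψb : ψ b ≤ 0 := psi_nonpos hρ hψ hbs
    by_cases has : a ≤ 0
    · simp only [if_pos hbs, if_pos has]
      nlinarith [h1]
    · simp only [if_pos hbs, if_neg has]
      push_neg at has
      have e1 : ψ b * (a - b) ≤ ψ b * (0 - b) :=
        mul_le_mul_of_nonpos_left (by linarith) hψb
      have e2 : ρ b + ψ b * (a - b) ≤ 0 := by nlinarith [hb, e1]
      nlinarith [hρ.2.1 a, e2]
  · push_neg at hbs
    have hψb : 0 < ψ b := psi_pos hρ hψ hbs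
    by_cases has : a ≤ 0
    · simp only [if_neg (not_le.2 hbs), if_pos has]
      have e1 : ψ b * (a - b) ≤ ψ b * (0 - b) :=
        mul_le_mul_of_nonneg_left (by linarith) hψb.le
      have e2 : ρ b + ψ b * (a - b) ≤ 0 := by nlinarith [hb, e1]
      nlinarith [hρ.2.1 a, e2]
    · simp only [if_neg (not_le.2 hbs), if_neg has]
      nlinarith [h1]

lemma psiA_abs_le {ψ : ℝ → ℝ} {α : ℝ} (hα : α ∈ Set.Ioo (0:ℝ) 1) (u : ℝ) :
    |psiA α ψ u| ≤ |ψ u| := by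
  obtain ⟨hα0, hα1⟩ := hα
  unfold psiA
  rw [abs_mul]
  have : |if u ≤ 0 then (1 - α) else α| ≤ 1 := by
    split <;> rw [abs_of_nonneg (by linarith)] <;> linarith
  nlinarith [abs_nonneg (ψ u), this]

lemma negpsiA {ρ ψ : ℝ → ℝ} (hρ : LossClass ρ) (hψ : IsLeftDeriv ρ ψ) (α t z : ℝ) :
    -psiA α ψ (z - t) = |ψ (z - t)| * ((if z ≤ t then 1 else 0) - α) := by
  unfold psiA
  by_cases h : z ≤ t
  · have hu : z - t ≤ 0 := by linarith
    rw [if_pos hu, if_pos h, abs_of_nonpos (psi_nonpos hρ hψ hu)]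
    ring
  · push_neg at h
    have hu : ¬(z - t ≤ 0) := by push_neg; linarith
    rw [if_neg hu, if_neg (not_le.2 h), abs_of_pos (psi_pos hρ hψ (by push_neg at hu; linarith))]
    ring

lemma rhoA_diff_bound {ρ ψ : ℝ → ℝ} (hρ : LossClass ρ) (hψ : IsLeftDeriv ρ ψ) {α : ℝ}
    (hα : α ∈ Set.Ioo (0:ℝ) 1) (a b : ℝ) :
    |rhoA ρ α a - rhoA ρ α b| ≤ |a - b| * (|ψ a| + |ψ b|) := by
  have h1 := subgradA hρ hψ hα b a
  have h2 := subgradA hρ hψ hα a b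
  have e1 : rhoA ρ α a - rhoA ρ α b ≥ psiA α ψ b * (a - b) := by linarith
  have e2 : rhoA ρ α a - rhoA ρ α b ≤ -(psiA α ψ a * (b - a)) := by linarith
  rw [abs_le]
  have h4 : |psiA α ψ b * (a - b)| ≤ |a - b| * (|ψ a| + |ψ b|) := by
    rw [abs_mul]
    nlinarith [psiA_abs_le (ψ := ψ) hα b, abs_nonneg (a - b), abs_nonneg (psiA α ψ b),
      abs_nonneg (ψ a)]
  have h5 : |psiA α ψ a * (b - a)| ≤ |a - b| * (|ψ a| + |ψ b|) := by
    rw [abs_mul, abs_sub_comm b a]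
    nlinarith [psiA_abs_le (ψ := ψ) hα a, abs_nonneg (a - b), abs_nonneg (psiA α ψ a),
      abs_nonneg (ψ b)]
  constructor
  · linarith [e1, neg_abs_le (psiA α ψ b * (a - b)), h4]
  · linarith [e2, neg_le_abs (psiA α ψ a * (b - a)), h5]

noncomputable def Ffun (ψ : ℝ → ℝ) (α : ℝ) (P : Measure ℝ) (t : ℝ) : ℝ :=
  ∫ z, |ψ (z - t)| * ((if z ≤ t then 1 else 0) - α) ∂P

set_option linter.unusedSectionVars false

section Meas

variable {ρ ψ : ℝ → ℝ} {α : ℝ} {P : Measure ℝ} [IsProbabilityMeasure P]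

lemma meas_psi (hρ : LossClass ρ) (hψ : IsLeftDeriv ρ ψ) : Measurable ψ :=
  (psi_mono hρ hψ).measurable

lemma cont_rho (hρ : LossClass ρ) : Continuous ρ :=
  continuousOn_univ.1 (hρ.1.continuousOn isOpen_univ)

lemma meas_rhoA (hρ : LossClass ρ) : Measurable (rhoA ρ α) := by
  unfold rhoA
  apply Measurable.mul _ (cont_rho hρ).measurable
  apply Measurable.add
  · exact (measurable_const.ite measurableSet_Iio measurable_const).const_mul _
  · exact (measurable_const.ite measurableSet_Ioi measurable_const).const_mul _

lemma meas_psi_shift (hρ : LossClass ρ) (hψ : IsLeftDeriv ρ ψ) (t : ℝ) :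
    Measurable (fun z : ℝ => |ψ (z - t)|) :=
  ((meas_psi hρ hψ).comp (measurable_id.sub_const t)).abs

lemma int_Fint (hρ : LossClass ρ) (hψ : IsLeftDeriv ρ ψ) (hα : α ∈ Set.Ioo (0:ℝ) 1)
    (hP2 : ∀ θ : ℝ, Integrable (fun z => |ψ (z - θ)|) P) (t : ℝ) :
    Integrable (fun z => |ψ (z - t)| * ((if z ≤ t then 1 else 0) - α)) P := by
  refine Integrable.mono (hP2 t) ?_ ?_
  · exact (((meas_psi_shift hρ hψ t).mul
      ((measurable_const.ite measurableSet_Iic measurable_const).sub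
        measurable_const))).aestronglyMeasurable
  · refine Eventually.of_forall fun z => ?_
    simp only [Real.norm_eq_abs, abs_mul, abs_abs]
    have : |(if z ≤ t then (1:ℝ) else 0) - α| ≤ 1 := by
      obtain ⟨h0, h1⟩ := hα
      split <;> rw [abs_le] <;> constructor <;> linarith
    nlinarith [abs_nonneg (ψ (z - t)), this]

lemma int_num (hρ : LossClass ρ) (hψ : IsLeftDeriv ρ ψ)
    (hP2 : ∀ θ : ℝ, Integrable (fun z => |ψ (z - θ)|) P) (t : ℝ) :
    Integrable (fun z => |ψ (z - t)| * (if z ≤ t then 1 else 0)) P := by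
  refine Integrable.mono (hP2 t) ?_ ?_
  · exact ((meas_psi_shift hρ hψ t).mul
      (measurable_const.ite measurableSet_Iic measurable_const)).aestronglyMeasurable
  · refine Eventually.of_forall fun z => ?_
    simp only [Real.norm_eq_abs, abs_mul, abs_abs]
    have : |(if z ≤ t then (1:ℝ) else 0)| ≤ 1 := by split <;> simp
    nlinarith [abs_nonneg (ψ (z - t)), this]

lemma int_obj (hρ : LossClass ρ) (hψ : IsLeftDeriv ρ ψ) (hα : α ∈ Set.Ioo (0:ℝ) 1)
    (hP2 : ∀ θ : ℝ, Integrable (fun z => |ψ (z - θ)|) P) (θ : ℝ) :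
    Integrable (fun z => rhoA ρ α (z - θ) - rhoA ρ α z) P := by
  have hint : Integrable (fun z => |θ| * (|ψ (z - θ)| + |ψ z|)) P := by
    refine Integrable.const_mul ?_ _
    have h0 : Integrable (fun z : ℝ => |ψ z|) P := by simpa using hP2 0
    exact (hP2 θ).add h0
  refine Integrable.mono hint ?_ ?_
  · exact (((meas_rhoA (α := α) hρ).comp (measurable_id.sub_const θ)).sub
      (meas_rhoA (α := α) hρ)).aestronglyMeasurable
  · refine Eventually.of_forall fun z => ?_
    simp only [Real.norm_eq_abs]
    have h := rhoA_diff_bound hρ hψ hα (z - θ) z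
    have he : |z - θ - z| = |θ| := by rw [show z - θ - z = -θ by ring, abs_neg]
    rw [he] at h
    calc |rhoA ρ α (z - θ) - rhoA ρ α z| ≤ |θ| * (|ψ (z - θ)| + |ψ z|) := h
      _ ≤ |(|θ| * (|ψ (z - θ)| + |ψ z|))| := le_abs_self _

lemma obj_subgrad (hρ : LossClass ρ) (hψ : IsLeftDeriv ρ ψ) (hα : α ∈ Set.Ioo (0:ℝ) 1)
    (hP2 : ∀ θ : ℝ, Integrable (fun z => |ψ (z - θ)|) P) (t θ : ℝ) :
    Obj ρ α P t + (θ - t) * Ffun ψ α P t ≤ Obj ρ α P θ := by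
  have key : ∀ z : ℝ, (θ - t) * (|ψ (z - t)| * ((if z ≤ t then 1 else 0) - α)) ≤
      (rhoA ρ α (z - θ) - rhoA ρ α z) - (rhoA ρ α (z - t) - rhoA ρ α z) := by
    intro z
    have h := subgradA hρ hψ hα (z - t) (z - θ)
    have he : psiA α ψ (z - t) * ((z - θ) - (z - t)) =
        (θ - t) * (-psiA α ψ (z - t)) := by ring
    rw [negpsiA hρ hψ α t z] at he
    linarith [h, he.symm.le, he.le]
  have h1 : Integrable (fun z => (θ - t) * (|ψ (z - t)| * ((if z ≤ t then 1 else 0) - α))) P :=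
    (int_Fint hρ hψ hα hP2 t).const_mul _
  have h2 : Integrable (fun z => (rhoA ρ α (z - θ) - rhoA ρ α z) -
      (rhoA ρ α (z - t) - rhoA ρ α z)) P :=
    (int_obj hρ hψ hα hP2 θ).sub (int_obj hρ hψ hα hP2 t)
  have h3 := integral_mono h1 h2 key
  rw [integral_const_mul] at h3
  rw [integral_sub (int_obj hρ hψ hα hP2 θ) (int_obj hρ hψ hα hP2 t)] at h3
  unfold Obj Ffun
  linarith [h3]

lemma den_pos (hρ : LossClass ρ) (hψ : IsLeftDeriv ρ ψ)
    (hP1 : ∀ θ : ℝ, P {θ} < 1) (hP2 : ∀ θ : ℝ, Integrable (fun z => |ψ (z - θ)|) P) (θ : ℝ) :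
    0 < ∫ z, |ψ (z - θ)| ∂P := by
  rw [integral_pos_iff_support_of_nonneg (fun z => abs_nonneg _) (hP2 θ)]
  have hsub : ({θ}ᶜ : Set ℝ) ⊆ Function.support fun z => |ψ (z - θ)| := by
    intro z hz
    simp only [Function.mem_support, ne_eq, abs_eq_zero]
    intro hzero
    rcases lt_trichotomy z θ with h | h | h
    · exact absurd hzero (psi_neg hρ hψ (by linarith : z - θ < 0)).ne
    · exact hz (by simpa using h)
    · exact absurd hzero (psi_pos hρ hψ (by linarith : 0 < z - θ)).ne'
  refine lt_of_lt_of_le ?_ (measure_mono hsub)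
  rw [prob_compl_eq_one_sub (measurableSet_singleton θ)]
  exact tsub_pos_iff_lt.2 (hP1 θ)

lemma Ffun_eq (hρ : LossClass ρ) (hψ : IsLeftDeriv ρ ψ) (hα : α ∈ Set.Ioo (0:ℝ) 1)
    (hP2 : ∀ θ : ℝ, Integrable (fun z => |ψ (z - θ)|) P) (θ : ℝ) :
    Ffun ψ α P θ = (∫ z, |ψ (z - θ)| * (if z ≤ θ then 1 else 0) ∂P)
      - α * ∫ z, |ψ (z - θ)| ∂P := by
  unfold Ffun
  rw [← integral_const_mul, ← integral_sub (int_num hρ hψ hP2 θ) ((hP2 θ).const_mul α)]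
  congr 1
  ext z
  ring

lemma mem_S_iff (hρ : LossClass ρ) (hψ : IsLeftDeriv ρ ψ) (hα : α ∈ Set.Ioo (0:ℝ) 1)
    (hP1 : ∀ θ : ℝ, P {θ} < 1) (hP2 : ∀ θ : ℝ, Integrable (fun z => |ψ (z - θ)|) P) (θ : ℝ) :
    α ≤ Gfun ψ P θ ↔ 0 ≤ Ffun ψ α P θ := by
  unfold Gfun
  rw [le_div_iff₀ (den_pos hρ hψ hP1 hP2 θ), Ffun_eq hρ hψ hα hP2 θ]
  constructor <;> intro h <;> linarith

lemma obj_lip (hρ : LossClass ρ) (hψ : IsLeftDeriv ρ ψ) (hα : α ∈ Set.Ioo (0:ℝ) 1)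
    (hP2 : ∀ θ : ℝ, Integrable (fun z => |ψ (z - θ)|) P) (t θ : ℝ) :
    |Obj ρ α P θ - Obj ρ α P t| ≤
      |θ - t| * ((∫ z, |ψ (z - θ)| ∂P) + ∫ z, |ψ (z - t)| ∂P) := by
  have hdiff : Obj ρ α P θ - Obj ρ α P t =
      ∫ z, ((rhoA ρ α (z - θ) - rhoA ρ α z) - (rhoA ρ α (z - t) - rhoA ρ α z)) ∂P := by
    rw [integral_sub (int_obj hρ hψ hα hP2 θ) (int_obj hρ hψ hα hP2 t)]
    rfl
  rw [hdiff]
  have h1 := norm_integral_le_integral_norm (μ := P)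
    (f := fun z => (rhoA ρ α (z - θ) - rhoA ρ α z) - (rhoA ρ α (z - t) - rhoA ρ α z))
  rw [Real.norm_eq_abs] at h1
  refine le_trans h1 ?_
  have h2 : ∀ z : ℝ, ‖(rhoA ρ α (z - θ) - rhoA ρ α z) - (rhoA ρ α (z - t) - rhoA ρ α z)‖ ≤
      |θ - t| * (|ψ (z - θ)| + |ψ (z - t)|) := by
    intro z
    rw [Real.norm_eq_abs]
    have h := rhoA_diff_bound hρ hψ hα (z - θ) (z - t)
    have he1 : (rhoA ρ α (z - θ) - rhoA ρ α z) - (rhoA ρ α (z - t) - rhoA ρ α z) =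
        rhoA ρ α (z - θ) - rhoA ρ α (z - t) := by ring
    have he2 : |z - θ - (z - t)| = |θ - t| := by
      rw [show z - θ - (z - t) = -(θ - t) by ring, abs_neg]
    rw [he1]
    rw [he2] at h
    exact h
  have hint2 : Integrable (fun z => |θ - t| * (|ψ (z - θ)| + |ψ (z - t)|)) P :=
    ((hP2 θ).add (hP2 t)).const_mul _
  have h3 : Integrable (fun z =>
      ‖(rhoA ρ α (z - θ) - rhoA ρ α z) - (rhoA ρ α (z - t) - rhoA ρ α z)‖) P :=
    ((int_obj hρ hψ hα hP2 θ).sub (int_obj hρ hψ hα hP2 t)).norm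
  refine le_trans (integral_mono h3 hint2 h2) ?_
  rw [integral_const_mul, integral_add (hP2 θ) (hP2 t)]

lemma ex_pos_Iic : ∃ z₀ : ℝ, 0 < P (Set.Iic z₀) := by
  by_contra h
  push_neg at h
  have hall : ∀ n : ℕ, P (Set.Iic (n : ℝ)) = 0 := fun n =>
    le_antisymm (h _) zero_le
  have huniv : (⋃ n : ℕ, Set.Iic (n : ℝ)) = Set.univ := by
    ext z
    simp only [Set.mem_iUnion, Set.mem_Iic, Set.mem_univ, iff_true]
    exact exists_nat_ge z
  have h0 : P Set.univ = 0 := by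
    rw [← huniv]
    exact measure_iUnion_null hall
  simp [measure_univ] at h0

lemma ex_pos_Ici : ∃ z₁ : ℝ, 0 < P (Set.Ici z₁) := by
  by_contra h
  push_neg at h
  have hall : ∀ n : ℕ, P (Set.Ici (-(n : ℝ))) = 0 := fun n =>
    le_antisymm (h _) zero_le
  have huniv : (⋃ n : ℕ, Set.Ici (-(n : ℝ))) = Set.univ := by
    ext z
    simp only [Set.mem_iUnion, Set.mem_Ici, Set.mem_univ, iff_true]
    obtain ⟨n, hn⟩ := exists_nat_ge (-z)
    exact ⟨n, by linarith⟩
  have h0 : P Set.univ = 0 := by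
    rw [← huniv]
    exact measure_iUnion_null hall
  simp [measure_univ] at h0

lemma tendsto_tail_upper (hρ : LossClass ρ) (hψ : IsLeftDeriv ρ ψ)
    (hP2 : ∀ θ : ℝ, Integrable (fun z => |ψ (z - θ)|) P) (r : ℝ) :
    Tendsto (fun n : ℕ => ∫ z, (if r + n < z then |ψ (z - r)| else 0) ∂P) atTop (𝓝 0) := by
  have h := tendsto_integral_of_dominated_convergence (μ := P)
    (F := fun (n : ℕ) (z : ℝ) => if r + n < z then |ψ (z - r)| else 0)
    (f := fun _ => (0 : ℝ)) (bound := fun z => |ψ (z - r)|)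
    (fun n => ((Measurable.ite measurableSet_Ioi (meas_psi_shift hρ hψ r)
      measurable_const)).aestronglyMeasurable)
    (hP2 r)
    (fun n => Eventually.of_forall fun z => by
      rw [Real.norm_eq_abs]
      split
      · rw [abs_abs]
      · simp [abs_nonneg])
    (Eventually.of_forall fun z => by
      obtain ⟨N, hN⟩ := exists_nat_ge (z - r)
      refine Tendsto.congr' ?_ tendsto_const_nhds
      filter_upwards [eventually_ge_atTop N] with n hn
      have : ¬ (r + n < z) := by
        push_neg
        have : (N : ℝ) ≤ n := Nat.cast_le.2 hn
        linarith
      simp [this])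
  simpa using h

lemma tendsto_tail_lower (hρ : LossClass ρ) (hψ : IsLeftDeriv ρ ψ)
    (hP2 : ∀ θ : ℝ, Integrable (fun z => |ψ (z - θ)|) P) (r : ℝ) :
    Tendsto (fun n : ℕ => ∫ z, (if z ≤ r - n then |ψ (z - r)| else 0) ∂P) atTop (𝓝 0) := by
  have h := tendsto_integral_of_dominated_convergence (μ := P)
    (F := fun (n : ℕ) (z : ℝ) => if z ≤ r - n then |ψ (z - r)| else 0)
    (f := fun _ => (0 : ℝ)) (bound := fun z => |ψ (z - r)|)
    (fun n => ((Measurable.ite measurableSet_Iic (meas_psi_shift hρ hψ r)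
      measurable_const)).aestronglyMeasurable)
    (hP2 r)
    (fun n => Eventually.of_forall fun z => by
      rw [Real.norm_eq_abs]
      split
      · rw [abs_abs]
      · simp [abs_nonneg])
    (Eventually.of_forall fun z => by
      obtain ⟨N, hN⟩ := exists_nat_ge (r - z + 1)
      refine Tendsto.congr' ?_ tendsto_const_nhds
      filter_upwards [eventually_ge_atTop N] with n hn
      have : ¬ (z ≤ r - n) := by
        push_neg
        have : (N : ℝ) ≤ n := Nat.cast_le.2 hn
        linarith
      simp [this])
  simpa using h

lemma exists_F_nonneg (hρ : LossClass ρ) (hψ : IsLeftDeriv ρ ψ) (hα : α ∈ Set.Ioo (0:ℝ) 1)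
    (hP2 : ∀ θ : ℝ, Integrable (fun z => |ψ (z - θ)|) P) :
    ∃ θ : ℝ, 0 ≤ Ffun ψ α P θ := by
  obtain ⟨hα0, hα1⟩ := hα
  obtain ⟨z₀, hz₀⟩ := ex_pos_Iic (P := P)
  set r := z₀ + 1 with hr
  have hψm1 : ψ (-1) < 0 := psi_neg hρ hψ (by norm_num)
  set c := (1 - α) * (|ψ (-1)| * (P (Set.Iic z₀)).toReal) with hc_def
  have hc : 0 < c := by
    have h1 : 0 < |ψ (-1)| := abs_pos.2 hψm1.ne
    have h2 : 0 < (P (Set.Iic z₀)).toReal := ENNReal.toReal_pos hz₀.ne' (measure_ne_top P _)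
    exact mul_pos (by linarith) (mul_pos h1 h2)
  have htail := (tendsto_tail_upper hρ hψ hP2 r).const_mul α
  rw [mul_zero] at htail
  obtain ⟨n, hn⟩ := (htail.eventually_lt_const hc).exists
  refine ⟨r + n, ?_⟩
  have hn0 : (0:ℝ) ≤ n := Nat.cast_nonneg n
  have hint1 : Integrable (fun z : ℝ => if z ≤ z₀ then |ψ (-1)| else 0) P := by
    have he : (fun z : ℝ => if z ≤ z₀ then |ψ (-1)| else 0) =
        (Set.Iic z₀).indicator (fun _ => |ψ (-1)|) := by
      ext z; simp [Set.indicator_apply]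
    rw [he]
    exact (integrable_const _).indicator measurableSet_Iic
  have hint2 : Integrable (fun z : ℝ => if r + (n:ℝ) < z then |ψ (z - r)| else 0) P := by
    refine Integrable.mono (hP2 r) ((Measurable.ite measurableSet_Ioi
      (meas_psi_shift hρ hψ r) measurable_const)).aestronglyMeasurable
      (Eventually.of_forall fun z => ?_)
    split
    · exact le_rfl
    · simp
  have hlow : ∀ z : ℝ,
      (1 - α) * (if z ≤ z₀ then |ψ (-1)| else 0) -
        α * (if r + (n:ℝ) < z then |ψ (z - r)| else 0) ≤
      |ψ (z - (r + n))| * ((if z ≤ r + (n:ℝ) then 1 else 0) - α) := by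
    intro z
    by_cases hz1 : z ≤ z₀
    · have hzθ : z ≤ r + (n:ℝ) := by simp only [hr]; linarith
      rw [if_pos hz1, if_pos hzθ, if_neg (by push_neg; linarith : ¬ r + (n:ℝ) < z)]
      have hmono : ψ (z - (r + n)) ≤ ψ (-1) := by
        apply psi_mono hρ hψ
        simp only [hr]; linarith
      have habs : |ψ (-1)| ≤ |ψ (z - (r + n))| := by
        rw [abs_of_nonpos hψm1.le, abs_of_nonpos (by linarith : ψ (z - (r+n)) ≤ 0)]
        linarith
      nlinarith [habs, abs_nonneg (ψ (-1))]
    · by_cases hz2 : z ≤ r + (n:ℝ)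
      · rw [if_neg hz1, if_pos hz2, if_neg (not_lt.2 hz2)]
        nlinarith [abs_nonneg (ψ (z - (r + n)))]
      · push_neg at hz2
        rw [if_neg hz1, if_pos hz2, if_neg (not_le.2 hz2)]
        have hmono : ψ (z - (r + n)) ≤ ψ (z - r) := by
          apply psi_mono hρ hψ; linarith
        have hpos : 0 < ψ (z - (r + n)) := psi_pos hρ hψ (by linarith)
        have habs : |ψ (z - (r + n))| ≤ |ψ (z - r)| := by
          rw [abs_of_pos hpos, abs_of_pos (by linarith : 0 < ψ (z - r))]
          linarith
        nlinarith [habs]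
  have hintlow : Integrable (fun z : ℝ =>
      (1 - α) * (if z ≤ z₀ then |ψ (-1)| else 0) -
        α * (if r + (n:ℝ) < z then |ψ (z - r)| else 0)) P :=
    (hint1.const_mul _).sub (hint2.const_mul _)
  have hmono := integral_mono hintlow (int_Fint hρ hψ ⟨hα0, hα1⟩ hP2 (r + n)) hlow
  have hcomp : ∫ z, ((1 - α) * (if z ≤ z₀ then |ψ (-1)| else 0) -
      α * (if r + (n:ℝ) < z then |ψ (z - r)| else 0)) ∂P =
      c - α * ∫ z, (if r + (n:ℝ) < z then |ψ (z - r)| else 0) ∂P := by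
    rw [integral_sub (hint1.const_mul _) (hint2.const_mul _), integral_const_mul,
      integral_const_mul]
    congr 1
    rw [hc_def]
    congr 1
    have he : (fun z : ℝ => if z ≤ z₀ then |ψ (-1)| else 0) =
        (Set.Iic z₀).indicator (fun _ => |ψ (-1)|) := by
      ext z; simp [Set.indicator_apply]
    rw [he, integral_indicator_const _ measurableSet_Iic, smul_eq_mul, mul_comm, measureReal_def]
  rw [hcomp] at hmono
  have : 0 ≤ c - α * ∫ z, (if r + (n:ℝ) < z then |ψ (z - r)| else 0) ∂P := by linarith [hn]
  unfold Ffun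
  linarith [hmono]

lemma F_neg_below (hρ : LossClass ρ) (hψ : IsLeftDeriv ρ ψ) (hα : α ∈ Set.Ioo (0:ℝ) 1)
    (hP2 : ∀ θ : ℝ, Integrable (fun z => |ψ (z - θ)|) P) :
    ∃ θ₀ : ℝ, ∀ θ ≤ θ₀, Ffun ψ α P θ < 0 := by
  obtain ⟨hα0, hα1⟩ := hα
  obtain ⟨z₁, hz₁⟩ := ex_pos_Ici (P := P)
  set r := z₁ - 1 with hr
  have hψ1 : 0 < ψ 1 := psi_pos hρ hψ (by norm_num)
  set c := α * (|ψ 1| * (P (Set.Ici z₁)).toReal) with hc_def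
  have hc : 0 < c := by
    have h1 : 0 < |ψ 1| := abs_pos.2 hψ1.ne'
    have h2 : 0 < (P (Set.Ici z₁)).toReal := ENNReal.toReal_pos hz₁.ne' (measure_ne_top P _)
    exact mul_pos hα0 (mul_pos h1 h2)
  have htail := (tendsto_tail_lower hρ hψ hP2 r).const_mul (1 - α)
  rw [mul_zero] at htail
  obtain ⟨n, hn⟩ := (htail.eventually_lt_const hc).exists
  refine ⟨r - n, fun θ hθ => ?_⟩
  have hn0 : (0:ℝ) ≤ n := Nat.cast_nonneg n
  have hθr : θ ≤ r := by linarith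
  have hint1 : Integrable (fun z : ℝ => if z ≤ θ then |ψ (z - r)| else 0) P := by
    refine Integrable.mono (hP2 r) ((Measurable.ite measurableSet_Iic
      (meas_psi_shift hρ hψ r) measurable_const)).aestronglyMeasurable
      (Eventually.of_forall fun z => ?_)
    split
    · exact le_rfl
    · simp
  have hint2 : Integrable (fun z : ℝ => if z₁ ≤ z then |ψ 1| else 0) P := by
    have he : (fun z : ℝ => if z₁ ≤ z then |ψ 1| else 0) =
        (Set.Ici z₁).indicator (fun _ => |ψ 1|) := by
      ext z; simp [Set.indicator_apply]
    rw [he]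
    exact (integrable_const _).indicator measurableSet_Ici
  have hup : ∀ z : ℝ,
      |ψ (z - θ)| * ((if z ≤ θ then 1 else 0) - α) ≤
      (1 - α) * (if z ≤ θ then |ψ (z - r)| else 0) - α * (if z₁ ≤ z then |ψ 1| else 0) := by
    intro z
    by_cases hz1 : z ≤ θ
    · have hz2 : ¬ z₁ ≤ z := by push_neg; simp only [hr] at hθr ⊢; linarith
      rw [if_pos hz1, if_pos hz1, if_neg hz2]
      have hmono : ψ (z - r) ≤ ψ (z - θ) := by apply psi_mono hρ hψ; linarith
      have hnp : ψ (z - θ) ≤ 0 := psi_nonpos hρ hψ (by linarith)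
      have habs : |ψ (z - θ)| ≤ |ψ (z - r)| := by
        rw [abs_of_nonpos hnp, abs_of_nonpos (by linarith : ψ (z - r) ≤ 0)]
        linarith
      nlinarith [habs, abs_nonneg (ψ (z - θ))]
    · by_cases hz2 : z₁ ≤ z
      · rw [if_neg hz1, if_neg hz1, if_pos hz2]
        push_neg at hz1
        have hmono : ψ 1 ≤ ψ (z - θ) := by
          apply psi_mono hρ hψ
          simp only [hr] at hθ; linarith
        have habs : |ψ 1| ≤ |ψ (z - θ)| := by
          rw [abs_of_pos hψ1, abs_of_pos (by linarith : 0 < ψ (z - θ))]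
          linarith
        nlinarith [habs]
      · rw [if_neg hz1, if_neg hz1, if_neg hz2]
        nlinarith [abs_nonneg (ψ (z - θ))]
  have hintup : Integrable (fun z : ℝ =>
      (1 - α) * (if z ≤ θ then |ψ (z - r)| else 0) -
        α * (if z₁ ≤ z then |ψ 1| else 0)) P :=
    (hint1.const_mul _).sub (hint2.const_mul _)
  have hmono := integral_mono (int_Fint hρ hψ ⟨hα0, hα1⟩ hP2 θ) hintup hup
  have hcomp : ∫ z, ((1 - α) * (if z ≤ θ then |ψ (z - r)| else 0) -
      α * (if z₁ ≤ z then |ψ 1| else 0)) ∂P =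
      (1 - α) * (∫ z, (if z ≤ θ then |ψ (z - r)| else 0) ∂P) - c := by
    rw [integral_sub (hint1.const_mul _) (hint2.const_mul _), integral_const_mul,
      integral_const_mul]
    congr 1
    rw [hc_def]
    congr 1
    have he : (fun z : ℝ => if z₁ ≤ z then |ψ 1| else 0) =
        (Set.Ici z₁).indicator (fun _ => |ψ 1|) := by
      ext z; simp [Set.indicator_apply]
    rw [he, integral_indicator_const _ measurableSet_Ici, smul_eq_mul, mul_comm, measureReal_def]
  rw [hcomp] at hmono
  -- monotone comparison with the tail at r - n
  have hTmono : (∫ z, (if z ≤ θ then |ψ (z - r)| else 0) ∂P) ≤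
      ∫ z, (if z ≤ r - (n:ℝ) then |ψ (z - r)| else 0) ∂P := by
    refine integral_mono hint1 ?_ fun z => ?_
    · refine Integrable.mono (hP2 r) ((Measurable.ite measurableSet_Iic
        (meas_psi_shift hρ hψ r) measurable_const)).aestronglyMeasurable
        (Eventually.of_forall fun z => ?_)
      split
      · exact le_rfl
      · simp
    · by_cases hz : z ≤ θ
      · rw [if_pos hz, if_pos (by linarith : z ≤ r - (n:ℝ))]
      · rw [if_neg hz]
        split
        · exact abs_nonneg _
        · exact le_rfl
  have hF : Ffun ψ α P θ ≤ (1 - α) * (∫ z, (if z ≤ r - (n:ℝ) then |ψ (z - r)| else 0) ∂P)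
      - c := by
    unfold Ffun
    have h2 : (1 - α) * (∫ z, (if z ≤ θ then |ψ (z - r)| else 0) ∂P) ≤
        (1 - α) * ∫ z, (if z ≤ r - (n:ℝ) then |ψ (z - r)| else 0) ∂P :=
      mul_le_mul_of_nonneg_left hTmono (by linarith)
    linarith [hmono]
  linarith [hF, hn]

lemma M_bound (hρ : LossClass ρ) (hψ : IsLeftDeriv ρ ψ)
    (hP2 : ∀ θ : ℝ, Integrable (fun z => |ψ (z - θ)|) P) (x s : ℝ) (h : |s - x| ≤ 1) :
    ∫ z, |ψ (z - s)| ∂P ≤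
      (∫ z, |ψ (z - (x - 1))| ∂P) + ∫ z, |ψ (z - (x + 1))| ∂P := by
  rw [← integral_add (hP2 (x - 1)) (hP2 (x + 1))]
  refine integral_mono (hP2 s) ((hP2 (x - 1)).add (hP2 (x + 1))) fun z => ?_
  rw [abs_le] at h
  have h1 : ψ (z - (x + 1)) ≤ ψ (z - s) := by apply psi_mono hρ hψ; linarith
  have h2 : ψ (z - s) ≤ ψ (z - (x - 1)) := by apply psi_mono hρ hψ; linarith
  have := abs_le_max_abs_abs h1 h2
  refine le_trans this (max_le ?_ ?_)
  · exact le_add_of_nonneg_left (abs_nonneg _)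
  · exact le_add_of_nonneg_right (abs_nonneg _)

end Meas

theorem stmt_3 (α : ℝ) (hα : α ∈ Set.Ioo (0 : ℝ) 1)
    (ρ ψ : ℝ → ℝ) (hρ : LossClass ρ) (hψ : IsLeftDeriv ρ ψ)
    (P : Measure ℝ) [IsProbabilityMeasure P]
    (hP1 : ∀ θ : ℝ, P {θ} < 1)
    (hP2 : ∀ θ : ℝ, Integrable (fun z => |ψ (z - θ)|) P) :
    {θ : ℝ | α ≤ Gfun ψ P θ}.Nonempty ∧
    BddBelow {θ : ℝ | α ≤ Gfun ψ P θ} ∧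
    (∀ θ : ℝ, Obj ρ α P (MQuant ψ P α) ≤ Obj ρ α P θ) := by
  have hSF : ∀ θ : ℝ, θ ∈ {θ : ℝ | α ≤ Gfun ψ P θ} ↔ 0 ≤ Ffun ψ α P θ := fun θ =>
    mem_S_iff hρ hψ hα hP1 hP2 θ
  obtain ⟨θ₁, hθ₁⟩ := exists_F_nonneg hρ hψ hα hP2
  have hne : {θ : ℝ | α ≤ Gfun ψ P θ}.Nonempty := ⟨θ₁, (hSF θ₁).2 hθ₁⟩
  obtain ⟨θ₀, hθ₀⟩ := F_neg_below hρ hψ hα hP2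
  have hbdd : BddBelow {θ : ℝ | α ≤ Gfun ψ P θ} := by
    refine ⟨θ₀, fun x hx => ?_⟩
    by_contra hc
    push_neg at hc
    exact absurd ((hSF x).1 hx) (not_le.2 (hθ₀ x hc.le))
  refine ⟨hne, hbdd, fun θ => ?_⟩
  have hMQ : MQuant ψ P α = sInf {θ : ℝ | α ≤ Gfun ψ P θ} := rfl
  set m := sInf {θ : ℝ | α ≤ Gfun ψ P θ} with hm
  rw [hMQ]
  set K := (∫ z, |ψ (z - (m - 1))| ∂P) + ∫ z, |ψ (z - (m + 1))| ∂P with hK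
  have hK0 : 0 ≤ K :=
    add_nonneg (integral_nonneg fun z => abs_nonneg _) (integral_nonneg fun z => abs_nonneg _)
  have hlip : ∀ t : ℝ, |t - m| ≤ 1 →
      |Obj ρ α P t - Obj ρ α P m| ≤ |t - m| * (2 * K) := by
    intro t ht
    have h1 := obj_lip hρ hψ hα hP2 m t
    have h2 : (∫ z, |ψ (z - t)| ∂P) ≤ K := M_bound hρ hψ hP2 m t ht
    have h3 : (∫ z, |ψ (z - m)| ∂P) ≤ K := M_bound hρ hψ hP2 m m (by simp)
    calc |Obj ρ α P t - Obj ρ α P m| ≤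
        |t - m| * ((∫ z, |ψ (z - t)| ∂P) + ∫ z, |ψ (z - m)| ∂P) := h1
      _ ≤ |t - m| * (2 * K) := by nlinarith [abs_nonneg (t - m)]
  refine le_of_forall_pos_le_add fun δ hδ => ?_
  set ε := min 1 (δ / (2 * K + 1)) with hε
  have hε0 : 0 < ε := lt_min one_pos (div_pos hδ (by linarith))
  have hε1 : ε ≤ 1 := min_le_left _ _
  have hεK : ε * (2 * K) ≤ δ := by
    have h1 : ε ≤ δ / (2 * K + 1) := min_le_right _ _
    have h2 : ε * (2 * K + 1) ≤ δ := by
      rw [← le_div_iff₀ (by linarith : (0:ℝ) < 2 * K + 1)]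
      exact h1
    nlinarith [hε0]
  rcases lt_trichotomy θ m with hlt | heq | hgt
  · set t := m - min ε (m - θ) with htdef
    have hmin0 : 0 < min ε (m - θ) := lt_min hε0 (by linarith)
    have h1 : θ ≤ t := by
      have := min_le_right ε (m - θ)
      simp only [htdef]; linarith
    have h2 : t < m := by simp only [htdef]; linarith
    have hts : t ∉ {θ : ℝ | α ≤ Gfun ψ P θ} := fun h => absurd (csInf_le hbdd h) (not_le.2 h2)
    have hF : Ffun ψ α P t < 0 := by
      by_contra hcon
      push_neg at hcon
      exact hts ((hSF t).2 hcon)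
    have hsub := obj_subgrad hρ hψ hα hP2 t θ
    have hprod : 0 ≤ (θ - t) * Ffun ψ α P t := by nlinarith [hF, h1]
    have hOt : Obj ρ α P t ≤ Obj ρ α P θ := by linarith
    have hd : |t - m| ≤ ε := by
      rw [htdef, show m - min ε (m - θ) - m = -(min ε (m - θ)) by ring, abs_neg,
        abs_of_pos hmin0]
      exact min_le_left _ _
    have h3 := hlip t (le_trans hd hε1)
    have h4 : |t - m| * (2 * K) ≤ ε * (2 * K) := by nlinarith [abs_nonneg (t - m)]
    have h5 := abs_le.1 h3
    linarith [h5.1, h4, hεK]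
  · rw [← heq]; linarith
  · have hε' : 0 < min ε (θ - m) := lt_min hε0 (by linarith)
    have hlt2 : m < m + min ε (θ - m) := by linarith
    obtain ⟨t, htS, htlt⟩ := (csInf_lt_iff hbdd hne).1
      (show sInf {θ : ℝ | α ≤ Gfun ψ P θ} < m + min ε (θ - m) from by rw [← hm]; exact hlt2)
    have hts : m ≤ t := csInf_le hbdd htS
    have htθ : t ≤ θ := by
      have := min_le_right ε (θ - m)
      linarith
    have hF : 0 ≤ Ffun ψ α P t := (hSF t).1 htS
    have hsub := obj_subgrad hρ hψ hα hP2 t θ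
    have hprod : 0 ≤ (θ - t) * Ffun ψ α P t := mul_nonneg (by linarith) hF
    have hOt : Obj ρ α P t ≤ Obj ρ α P θ := by linarith
    have hd : |t - m| ≤ ε := by
      rw [abs_of_nonneg (by linarith : 0 ≤ t - m)]
      have h6 := min_le_left ε (θ - m)
      linarith
    have h3 := hlip t (le_trans hd hε1)
    have h4 : |t - m| * (2 * K) ≤ ε * (2 * K) := by nlinarith [abs_nonneg (t - m)]
    have h5 := abs_le.1 h3
    linarith [h5.1, h4, hεK]
end
end

section
/- Let ρ(t) = t² and let X and Y be random d-vectors defined on a common probability space whose laws (and the law of X+Y) belong to 𝒫^ρ_d. Then: (i) (subadditivity) for every α ∈ (0,1/2] and every u ∈ S^{d−1}, H^ρ_{α,u}(X+Y) ⊆ H^ρ_{α,u}(X) ⊕ H^ρ_{α,u}(Y); (ii) (superadditivity) for every α ∈ [1/2,1) and every u ∈ S^{d−1}, H^ρ_{α,u}(X) ⊕ H^ρ_{α,u}(Y) ⊆ H^ρ_{α,u}(X+Y), where ⊕ denotes the Minkowski sum of subsets of ℝ^d. -/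
open MeasureTheory Set Filter
open scoped RealInnerProductSpace Pointwise

noncomputable section

/-- For the quadratic loss `ρ(t) = t²`:
`G_Q(θ) = E_Q[|Y−θ|·𝟙[Y ≤ θ]] / E_Q[|Y−θ|]`. -/
def Gexp (Q : Measure ℝ) (θ : ℝ) : ℝ :=
  (∫ y, |y - θ| * (if y ≤ θ then 1 else 0) ∂Q) / ∫ y, |y - θ| ∂Q

/-- The univariate order-`α` expectile `θ^ρ_α(Q) = inf{θ : G_Q(θ) ≥ α}`. -/
def expectileQ (Q : Measure ℝ) (α : ℝ) : ℝ :=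
  sInf {θ : ℝ | α ≤ Gexp Q θ}

/-- The order-`α` expectile halfspace of a random vector `X` in direction `u`:
`H^ρ_{α,u}(X) = {z : u'z ≥ θ^ρ_α(law of u'X)}`. -/
def expHalf {d : ℕ} {Ω : Type*} [MeasurableSpace Ω] (μ : Measure Ω)
    (X : Ω → EuclideanSpace ℝ (Fin d)) (α : ℝ) (u : EuclideanSpace ℝ (Fin d)) :
    Set (EuclideanSpace ℝ (Fin d)) :=
  {z | expectileQ (μ.map fun ω => ⟪u, X ω⟫) α ≤ ⟪u, z⟫}

def psiE (α x : ℝ) : ℝ := if 0 ≤ x then α * x else (1 - α) * x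

lemma psiE_eq_max (α x : ℝ) : psiE α x = α * max x 0 - (1 - α) * max (-x) 0 := by
  unfold psiE
  rcases le_or_gt 0 x with h | h
  · rw [if_pos h, max_eq_left h, max_eq_right (by linarith : -x ≤ 0)]; ring
  · rw [if_neg (not_le.2 h), max_eq_right h.le, max_eq_left (by linarith : (0:ℝ) ≤ -x)]; ring

lemma psiE_super {α : ℝ} (h0 : 0 ≤ α) (hle : α ≤ 1 / 2) (s t : ℝ) :
    psiE α s + psiE α t ≤ psiE α (s + t) := by
  unfold psiE; split_ifs <;> nlinarith

lemma psiE_sub {α : ℝ} (hle : 1 / 2 ≤ α) (h1 : α ≤ 1) (s t : ℝ) :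
    psiE α (s + t) ≤ psiE α s + psiE α t := by
  unfold psiE; split_ifs <;> nlinarith

lemma psiE_strong {α : ℝ} (h0 : 0 ≤ α) (h1 : α ≤ 1) {s t : ℝ} (h : t ≤ s) :
    min α (1 - α) * (s - t) ≤ psiE α s - psiE α t ∧ psiE α s - psiE α t ≤ s - t := by
  have hm1 : min α (1 - α) ≤ α := min_le_left _ _
  have hm2 : min α (1 - α) ≤ 1 - α := min_le_right _ _
  unfold psiE; split_ifs <;> constructor <;> nlinarith

section abstractF
variable {F : ℝ → ℝ} {c₀ : ℝ}

lemma absF_nonempty (hc : 0 < c₀)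
    (hdec : ∀ θ₁ θ₂ : ℝ, θ₁ ≤ θ₂ → F θ₂ ≤ F θ₁ - c₀ * (θ₂ - θ₁)) :
    ∃ θ, F θ ≤ 0 := by
  rcases le_or_gt (F 0) 0 with h | h
  · exact ⟨0, h⟩
  · refine ⟨F 0 / c₀, ?_⟩
    have hpos : 0 ≤ F 0 / c₀ := by positivity
    have := hdec 0 (F 0 / c₀) hpos
    have hcc : c₀ * (F 0 / c₀ - 0) = F 0 := by field_simp; ring
    linarith

lemma absF_bddBelow (hc : 0 < c₀)
    (hdec : ∀ θ₁ θ₂ : ℝ, θ₁ ≤ θ₂ → F θ₂ ≤ F θ₁ - c₀ * (θ₂ - θ₁)) :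
    BddBelow {θ | F θ ≤ 0} := by
  refine ⟨min 0 (F 0 / c₀), fun θ hθ => ?_⟩
  rcases le_or_gt 0 θ with h | h
  · exact le_trans (min_le_left _ _) h
  · have := hdec θ 0 h.le
    have : F 0 / c₀ ≤ θ := by
      rw [div_le_iff₀ hc]
      have hθ0 : F θ ≤ 0 := hθ
      nlinarith
    exact le_trans (min_le_right _ _) this

lemma absF_sInf_nonneg (hc : 0 < c₀)
    (hdec : ∀ θ₁ θ₂ : ℝ, θ₁ ≤ θ₂ → F θ₂ ≤ F θ₁ - c₀ * (θ₂ - θ₁))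
    (hlip : ∀ θ₁ θ₂ : ℝ, θ₁ ≤ θ₂ → F θ₁ ≤ F θ₂ + (θ₂ - θ₁)) :
    0 ≤ F (sInf {θ | F θ ≤ 0}) := by
  set s := sInf {θ | F θ ≤ 0} with hs
  by_contra hcon
  push_neg at hcon
  have hε : (0:ℝ) < -F s := by linarith
  have hnm : s - (-F s) ∉ {θ | F θ ≤ 0} :=
    notMem_of_lt_csInf (by linarith) (absF_bddBelow hc hdec)
  have h1 : ¬ F (s - (-F s)) ≤ 0 := hnm
  have h2 := hlip (s - (-F s)) s (by linarith)
  push_neg at h1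
  linarith

lemma absF_sInf_nonpos (hc : 0 < c₀)
    (hdec : ∀ θ₁ θ₂ : ℝ, θ₁ ≤ θ₂ → F θ₂ ≤ F θ₁ - c₀ * (θ₂ - θ₁))
    (hlip : ∀ θ₁ θ₂ : ℝ, θ₁ ≤ θ₂ → F θ₁ ≤ F θ₂ + (θ₂ - θ₁)) :
    F (sInf {θ | F θ ≤ 0}) ≤ 0 := by
  set s := sInf {θ | F θ ≤ 0} with hs
  by_contra hcon
  push_neg at hcon
  have hne : {θ | F θ ≤ 0}.Nonempty := absF_nonempty hc hdec
  obtain ⟨t, ht, htlt⟩ := exists_lt_of_csInf_lt hne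
    (show s < s + F s by linarith)
  have hst : s ≤ t := csInf_le (absF_bddBelow hc hdec) ht
  have := hlip s t hst
  have ht0 : F t ≤ 0 := ht
  linarith

lemma absF_le_sInf (hc : 0 < c₀)
    (hdec : ∀ θ₁ θ₂ : ℝ, θ₁ ≤ θ₂ → F θ₂ ≤ F θ₁ - c₀ * (θ₂ - θ₁))
    {θ : ℝ} (hθ : 0 ≤ F θ) : θ ≤ sInf {θ | F θ ≤ 0} := by
  by_contra hcon
  push_neg at hcon
  have hne : {θ | F θ ≤ 0}.Nonempty := absF_nonempty hc hdec
  obtain ⟨t, ht, htlt⟩ := exists_lt_of_csInf_lt hne hcon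
  have ht0 : F t ≤ 0 := ht
  have := hdec t θ htlt.le
  nlinarith

end abstractF


section measureLayer
variable {Ω : Type*} [MeasurableSpace Ω] (μ : Measure Ω) [IsProbabilityMeasure μ]

/-- `F_W(θ) = E[ψ_α(W−θ)]`. -/
def Fexp (W : Ω → ℝ) (α θ : ℝ) : ℝ := ∫ ω, psiE α (W ω - θ) ∂μ

variable {W : Ω → ℝ} {α : ℝ}

lemma intA (hWi : Integrable W μ) (θ : ℝ) :
    Integrable (fun ω => max (W ω - θ) 0) μ :=
  (hWi.sub (integrable_const θ)).pos_part

lemma intB (hWi : Integrable W μ) (θ : ℝ) :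
    Integrable (fun ω => max (θ - W ω) 0) μ :=
  ((integrable_const θ).sub hWi).pos_part

lemma intPsi (hWi : Integrable W μ) (θ : ℝ) :
    Integrable (fun ω => psiE α (W ω - θ)) μ := by
  have h : (fun ω => psiE α (W ω - θ))
      = fun ω => α * max (W ω - θ) 0 - (1 - α) * max (θ - W ω) 0 := by
    funext ω; rw [psiE_eq_max]; ring_nf
  rw [h]
  exact ((intA μ hWi θ).const_mul α).sub ((intB μ hWi θ).const_mul (1 - α))

lemma Fexp_eq (hWi : Integrable W μ) (θ : ℝ) :
    Fexp μ W α θ = α * (∫ ω, max (W ω - θ) 0 ∂μ) - (1 - α) * (∫ ω, max (θ - W ω) 0 ∂μ) := by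
  unfold Fexp
  have h : (fun ω => psiE α (W ω - θ))
      = fun ω => α * max (W ω - θ) 0 - (1 - α) * max (θ - W ω) 0 := by
    funext ω; rw [psiE_eq_max]; ring_nf
  rw [h, integral_sub ((intA μ hWi θ).const_mul α) ((intB μ hWi θ).const_mul (1 - α)),
    integral_const_mul, integral_const_mul]

lemma abs_eq_max_add (x : ℝ) : |x| = max x 0 + max (-x) 0 := by
  rcases le_total 0 x with h | h
  · rw [abs_of_nonneg h, max_eq_left h, max_eq_right (neg_nonpos.2 h), add_zero]
  · rw [abs_of_nonpos h, max_eq_right h, max_eq_left (neg_nonneg.2 h), zero_add]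

lemma Gexp_map (hWm : Measurable W) (hWi : Integrable W μ) (θ : ℝ) :
    Gexp (μ.map W) θ =
      (∫ ω, max (θ - W ω) 0 ∂μ) /
        ((∫ ω, max (W ω - θ) 0 ∂μ) + (∫ ω, max (θ - W ω) 0 ∂μ)) := by
  unfold Gexp
  have hm1 : AEStronglyMeasurable (fun y : ℝ => |y - θ| * (if y ≤ θ then 1 else 0))
      (μ.map W) := by
    apply Measurable.aestronglyMeasurable
    exact ((measurable_id.sub_const θ).abs).mul
      (Measurable.ite (measurableSet_le measurable_id measurable_const)
        measurable_const measurable_const)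
  have hm2 : AEStronglyMeasurable (fun y : ℝ => |y - θ|) (μ.map W) :=
    ((measurable_id.sub_const θ).abs).aestronglyMeasurable
  rw [integral_map hWm.aemeasurable hm1, integral_map hWm.aemeasurable hm2]
  have h1 : (fun ω => |W ω - θ| * (if W ω ≤ θ then 1 else 0))
      = fun ω => max (θ - W ω) 0 := by
    funext ω
    rcases le_or_gt (W ω) θ with h | h
    · rw [if_pos h, mul_one, abs_of_nonpos (by linarith), max_eq_left (by linarith)]; ring
    · rw [if_neg (not_le.2 h), mul_zero, max_eq_right (by linarith)]
  have h2 : (fun ω => |W ω - θ|)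
      = fun ω => max (W ω - θ) 0 + max (θ - W ω) 0 := by
    funext ω
    rw [abs_eq_max_add]; ring_nf
  rw [h1, h2]
  congr 1
  exact integral_add (intA μ hWi θ) (intB μ hWi θ)

lemma denom_pos (hWm : Measurable W) (hWi : Integrable W μ)
    (hnd : ∀ c : ℝ, μ {ω | W ω = c} < 1) (θ : ℝ) :
    0 < (∫ ω, max (W ω - θ) 0 ∂μ) + (∫ ω, max (θ - W ω) 0 ∂μ) := by
  have habs : (∫ ω, |W ω - θ| ∂μ)
      = (∫ ω, max (W ω - θ) 0 ∂μ) + (∫ ω, max (θ - W ω) 0 ∂μ) := by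
    have h2 : (fun ω => |W ω - θ|)
        = fun ω => max (W ω - θ) 0 + max (θ - W ω) 0 := by
      funext ω; rw [abs_eq_max_add]; ring_nf
    rw [h2]; exact integral_add (intA μ hWi θ) (intB μ hWi θ)
  rw [← habs]
  have hint : Integrable (fun ω => |W ω - θ|) μ := (hWi.sub (integrable_const θ)).abs
  rw [integral_pos_iff_support_of_nonneg (fun ω => abs_nonneg _) hint]
  have hsupp : Function.support (fun ω => |W ω - θ|) = {ω | W ω = θ}ᶜ := by
    ext ω
    simp [Function.support, sub_eq_zero]
  rw [hsupp]
  have hms : MeasurableSet {ω | W ω = θ} := hWm (measurableSet_singleton θ)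
  rw [measure_compl hms (measure_ne_top μ _)]
  rw [measure_univ]
  exact tsub_pos_iff_lt.2 (hnd θ)

lemma Gexp_set_eq (hWm : Measurable W) (hWi : Integrable W μ)
    (hnd : ∀ c : ℝ, μ {ω | W ω = c} < 1) (hα0 : 0 < α) (hα1 : α < 1) :
    {θ : ℝ | α ≤ Gexp (μ.map W) θ} = {θ : ℝ | Fexp μ W α θ ≤ 0} := by
  ext θ
  have hd := denom_pos μ hWm hWi hnd θ
  rw [Set.mem_setOf_eq, Set.mem_setOf_eq, Gexp_map μ hWm hWi θ, Fexp_eq μ hWi θ,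
    le_div_iff₀ hd]
  constructor <;> intro h <;> nlinarith

lemma expectileQ_eq_sInf (hWm : Measurable W) (hWi : Integrable W μ)
    (hnd : ∀ c : ℝ, μ {ω | W ω = c} < 1) (hα0 : 0 < α) (hα1 : α < 1) :
    expectileQ (μ.map W) α = sInf {θ : ℝ | Fexp μ W α θ ≤ 0} := by
  unfold expectileQ
  rw [Gexp_set_eq μ hWm hWi hnd hα0 hα1]

lemma Fexp_dec (hWi : Integrable W μ) (hα0 : 0 < α) (hα1 : α < 1)
    {θ₁ θ₂ : ℝ} (h : θ₁ ≤ θ₂) :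
    Fexp μ W α θ₂ ≤ Fexp μ W α θ₁ - min α (1 - α) * (θ₂ - θ₁) := by
  have key : ∀ ω, psiE α (W ω - θ₂) ≤ psiE α (W ω - θ₁) - min α (1 - α) * (θ₂ - θ₁) := by
    intro ω
    have := (psiE_strong hα0.le hα1.le (show W ω - θ₂ ≤ W ω - θ₁ by linarith)).1
    have heq : W ω - θ₁ - (W ω - θ₂) = θ₂ - θ₁ := by ring
    rw [heq] at this
    linarith
  have h1 : Fexp μ W α θ₂ ≤ ∫ ω, (psiE α (W ω - θ₁) - min α (1 - α) * (θ₂ - θ₁)) ∂μ := by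
    apply integral_mono (intPsi μ hWi θ₂)
      ((intPsi μ hWi θ₁).sub (integrable_const _)) key
  have h2 : (∫ ω, (psiE α (W ω - θ₁) - min α (1 - α) * (θ₂ - θ₁)) ∂μ)
      = Fexp μ W α θ₁ - min α (1 - α) * (θ₂ - θ₁) := by
    rw [integral_sub (intPsi μ hWi θ₁) (integrable_const _), integral_const]
    simp only [measure_univ, ENNReal.toReal_one, probReal_univ, smul_eq_mul, one_mul]
    rfl
  linarith

lemma Fexp_lip (hWi : Integrable W μ) (hα0 : 0 < α) (hα1 : α < 1)
    {θ₁ θ₂ : ℝ} (h : θ₁ ≤ θ₂) :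
    Fexp μ W α θ₁ ≤ Fexp μ W α θ₂ + (θ₂ - θ₁) := by
  have key : ∀ ω, psiE α (W ω - θ₁) ≤ psiE α (W ω - θ₂) + (θ₂ - θ₁) := by
    intro ω
    have := (psiE_strong hα0.le hα1.le (show W ω - θ₂ ≤ W ω - θ₁ by linarith)).2
    linarith
  have h1 : Fexp μ W α θ₁ ≤ ∫ ω, (psiE α (W ω - θ₂) + (θ₂ - θ₁)) ∂μ := by
    apply integral_mono (intPsi μ hWi θ₁)
      ((intPsi μ hWi θ₂).add (integrable_const _)) key
  have h2 : (∫ ω, (psiE α (W ω - θ₂) + (θ₂ - θ₁)) ∂μ)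
      = Fexp μ W α θ₂ + (θ₂ - θ₁) := by
    rw [integral_add (intPsi μ hWi θ₂) (integrable_const _), integral_const]
    simp only [measure_univ, ENNReal.toReal_one, probReal_univ, smul_eq_mul, one_mul]
    rfl
  linarith

lemma Fexp_superadd {U V : Ω → ℝ} (hUi : Integrable U μ) (hVi : Integrable V μ)
    (h0 : 0 < α) (hle : α ≤ 1 / 2) (a b : ℝ) :
    Fexp μ U α a + Fexp μ V α b ≤ Fexp μ (fun ω => U ω + V ω) α (a + b) := by
  have key : ∀ ω, psiE α (U ω - a) + psiE α (V ω - b)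
      ≤ psiE α (U ω + V ω - (a + b)) := by
    intro ω
    have := psiE_super h0.le hle (U ω - a) (V ω - b)
    have heq : U ω - a + (V ω - b) = U ω + V ω - (a + b) := by ring
    rwa [heq] at this
  have h1 : (∫ ω, (psiE α (U ω - a) + psiE α (V ω - b)) ∂μ)
      ≤ Fexp μ (fun ω => U ω + V ω) α (a + b) :=
    integral_mono ((intPsi μ hUi a).add (intPsi μ hVi b)) (intPsi μ (hUi.add hVi) (a + b)) key
  have h2 : (∫ ω, (psiE α (U ω - a) + psiE α (V ω - b)) ∂μ)
      = Fexp μ U α a + Fexp μ V α b :=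
    integral_add (intPsi μ hUi a) (intPsi μ hVi b)
  linarith

lemma Fexp_subadd {U V : Ω → ℝ} (hUi : Integrable U μ) (hVi : Integrable V μ)
    (hle : 1 / 2 ≤ α) (h1 : α < 1) (a b : ℝ) :
    Fexp μ (fun ω => U ω + V ω) α (a + b) ≤ Fexp μ U α a + Fexp μ V α b := by
  have key : ∀ ω, psiE α (U ω + V ω - (a + b))
      ≤ psiE α (U ω - a) + psiE α (V ω - b) := by
    intro ω
    have := psiE_sub hle h1.le (U ω - a) (V ω - b)
    have heq : U ω - a + (V ω - b) = U ω + V ω - (a + b) := by ring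
    rwa [heq] at this
  have h1' : Fexp μ (fun ω => U ω + V ω) α (a + b)
      ≤ ∫ ω, (psiE α (U ω - a) + psiE α (V ω - b)) ∂μ :=
    integral_mono (intPsi μ (hUi.add hVi) (a + b)) ((intPsi μ hUi a).add (intPsi μ hVi b)) key
  have h2 : (∫ ω, (psiE α (U ω - a) + psiE α (V ω - b)) ∂μ)
      = Fexp μ U α a + Fexp μ V α b :=
    integral_add (intPsi μ hUi a) (intPsi μ hVi b)
  linarith

end measureLayer

section cmp
variable {Ω : Type*} [MeasurableSpace Ω] (μ : Measure Ω) [IsProbabilityMeasure μ]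
variable {α : ℝ} {U V : Ω → ℝ}

lemma cpos {α : ℝ} (h0 : 0 < α) (h1 : α < 1) : 0 < min α (1 - α) :=
  lt_min h0 (by linarith)

lemma expectile_superadd (hUm : Measurable U) (hVm : Measurable V)
    (hUi : Integrable U μ) (hVi : Integrable V μ)
    (hndU : ∀ c : ℝ, μ {ω | U ω = c} < 1) (hndV : ∀ c : ℝ, μ {ω | V ω = c} < 1)
    (hndUV : ∀ c : ℝ, μ {ω | U ω + V ω = c} < 1)
    (hα0 : 0 < α) (hle : α ≤ 1 / 2) :
    expectileQ (μ.map U) α + expectileQ (μ.map V) α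
      ≤ expectileQ (μ.map fun ω => U ω + V ω) α := by
  have hα1 : α < 1 := by linarith
  have hc := cpos hα0 hα1
  rw [expectileQ_eq_sInf μ hUm hUi hndU hα0 hα1,
    expectileQ_eq_sInf μ hVm hVi hndV hα0 hα1,
    expectileQ_eq_sInf μ (W := fun ω => U ω + V ω) (hUm.add hVm) (hUi.add hVi) hndUV hα0 hα1]
  set a := sInf {θ : ℝ | Fexp μ U α θ ≤ 0}
  set b := sInf {θ : ℝ | Fexp μ V α θ ≤ 0}
  have ha : 0 ≤ Fexp μ U α a :=
    absF_sInf_nonneg hc (fun θ₁ θ₂ h => Fexp_dec μ hUi hα0 hα1 h)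
      (fun θ₁ θ₂ h => Fexp_lip μ hUi hα0 hα1 h)
  have hb : 0 ≤ Fexp μ V α b :=
    absF_sInf_nonneg hc (fun θ₁ θ₂ h => Fexp_dec μ hVi hα0 hα1 h)
      (fun θ₁ θ₂ h => Fexp_lip μ hVi hα0 hα1 h)
  have hsum : 0 ≤ Fexp μ (fun ω => U ω + V ω) α (a + b) :=
    le_trans (by linarith) (Fexp_superadd μ hUi hVi hα0 hle a b)
  exact absF_le_sInf hc (fun θ₁ θ₂ h => Fexp_dec μ (hUi.add hVi) hα0 hα1 h) hsum

lemma expectile_subadd (hUm : Measurable U) (hVm : Measurable V)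
    (hUi : Integrable U μ) (hVi : Integrable V μ)
    (hndU : ∀ c : ℝ, μ {ω | U ω = c} < 1) (hndV : ∀ c : ℝ, μ {ω | V ω = c} < 1)
    (hndUV : ∀ c : ℝ, μ {ω | U ω + V ω = c} < 1)
    (hle : 1 / 2 ≤ α) (hα1 : α < 1) :
    expectileQ (μ.map fun ω => U ω + V ω) α
      ≤ expectileQ (μ.map U) α + expectileQ (μ.map V) α := by
  have hα0 : 0 < α := by linarith
  have hc := cpos hα0 hα1
  rw [expectileQ_eq_sInf μ hUm hUi hndU hα0 hα1,
    expectileQ_eq_sInf μ hVm hVi hndV hα0 hα1,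
    expectileQ_eq_sInf μ (W := fun ω => U ω + V ω) (hUm.add hVm) (hUi.add hVi) hndUV hα0 hα1]
  set a := sInf {θ : ℝ | Fexp μ U α θ ≤ 0}
  set b := sInf {θ : ℝ | Fexp μ V α θ ≤ 0}
  have ha : Fexp μ U α a ≤ 0 :=
    absF_sInf_nonpos hc (fun θ₁ θ₂ h => Fexp_dec μ hUi hα0 hα1 h)
      (fun θ₁ θ₂ h => Fexp_lip μ hUi hα0 hα1 h)
  have hb : Fexp μ V α b ≤ 0 :=
    absF_sInf_nonpos hc (fun θ₁ θ₂ h => Fexp_dec μ hVi hα0 hα1 h)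
      (fun θ₁ θ₂ h => Fexp_lip μ hVi hα0 hα1 h)
  have hsum : Fexp μ (fun ω => U ω + V ω) α (a + b) ≤ 0 :=
    le_trans (Fexp_subadd μ hUi hVi hle hα1 a b) (by linarith)
  exact csInf_le (absF_bddBelow hc (fun θ₁ θ₂ h => Fexp_dec μ (hUi.add hVi) hα0 hα1 h)) hsum
end cmp

theorem stmt_19 {d : ℕ} (hd : 0 < d) {Ω : Type*} [MeasurableSpace Ω]
    (μ : Measure Ω) [IsProbabilityMeasure μ]
    (X Y : Ω → EuclideanSpace ℝ (Fin d))
    (hXmeas : Measurable X) (hYmeas : Measurable Y)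
    (hXmom : Integrable X μ) (hYmom : Integrable Y μ)
    (hXhyp : ∀ u : EuclideanSpace ℝ (Fin d), ‖u‖ = 1 → ∀ c : ℝ,
      μ {ω | ⟪u, X ω⟫ = c} < 1)
    (hYhyp : ∀ u : EuclideanSpace ℝ (Fin d), ‖u‖ = 1 → ∀ c : ℝ,
      μ {ω | ⟪u, Y ω⟫ = c} < 1)
    (hXYhyp : ∀ u : EuclideanSpace ℝ (Fin d), ‖u‖ = 1 → ∀ c : ℝ,
      μ {ω | ⟪u, X ω + Y ω⟫ = c} < 1) :
    (∀ α : ℝ, 0 < α → α ≤ 1 / 2 →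
      ∀ u : EuclideanSpace ℝ (Fin d), ‖u‖ = 1 →
        expHalf μ (fun ω => X ω + Y ω) α u ⊆ expHalf μ X α u + expHalf μ Y α u) ∧
    (∀ α : ℝ, 1 / 2 ≤ α → α < 1 →
      ∀ u : EuclideanSpace ℝ (Fin d), ‖u‖ = 1 →
        expHalf μ X α u + expHalf μ Y α u ⊆ expHalf μ (fun ω => X ω + Y ω) α u) := by
  have hinner_meas : ∀ (Z : Ω → EuclideanSpace ℝ (Fin d)), Measurable Z →
      ∀ u : EuclideanSpace ℝ (Fin d), Measurable (fun ω => ⟪u, Z ω⟫) := by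
    intro Z hZ u
    exact ((continuous_const.inner continuous_id).measurable).comp hZ
  have hinner_int : ∀ (Z : Ω → EuclideanSpace ℝ (Fin d)), Measurable Z →
      Integrable Z μ → ∀ u : EuclideanSpace ℝ (Fin d), ‖u‖ = 1 →
      Integrable (fun ω => ⟪u, Z ω⟫) μ := by
    intro Z hZm hZi u hu
    refine Integrable.mono' hZi.norm ((hinner_meas Z hZm u).aestronglyMeasurable) ?_
    filter_upwards with ω
    calc ‖⟪u, Z ω⟫‖ = |⟪u, Z ω⟫| := rfl
      _ ≤ ‖u‖ * ‖Z ω‖ := abs_real_inner_le_norm u (Z ω)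
      _ = ‖Z ω‖ := by rw [hu, one_mul]
  constructor
  · intro α hα0 hα12 u hu z hz
    set U : Ω → ℝ := fun ω => ⟪u, X ω⟫ with hU
    set V : Ω → ℝ := fun ω => ⟪u, Y ω⟫ with hV
    have hmapeq : (fun ω => ⟪u, X ω + Y ω⟫) = fun ω => U ω + V ω := by
      funext ω; exact inner_add_right u (X ω) (Y ω)
    have hz' : expectileQ (μ.map fun ω => U ω + V ω) α ≤ ⟪u, z⟫ := by
      have h := hz
      simp only [expHalf, Set.mem_setOf_eq] at h
      rwa [hmapeq] at h
    have hndUV : ∀ c : ℝ, μ {ω | U ω + V ω = c} < 1 := by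
      intro c
      have hset : {ω | U ω + V ω = c} = {ω | ⟪u, X ω + Y ω⟫ = c} := by
        ext ω
        simp only [Set.mem_setOf_eq]
        rw [inner_add_right]
      rw [hset]
      exact hXYhyp u hu c
    have key := expectile_superadd μ (hinner_meas X hXmeas u) (hinner_meas Y hYmeas u)
      (hinner_int X hXmeas hXmom u hu) (hinner_int Y hYmeas hYmom u hu)
      (hXhyp u hu) (hYhyp u hu) hndUV hα0 hα12
    set a := expectileQ (μ.map U) α with ha
    set b := expectileQ (μ.map V) α with hb
    have hab : a + b ≤ ⟪u, z⟫ := le_trans key hz'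
    refine Set.mem_add.mpr ⟨z - (⟪u, z⟫ - a) • u, ?_, (⟪u, z⟫ - a) • u, ?_, by abel⟩
    · show a ≤ ⟪u, z - (⟪u, z⟫ - a) • u⟫
      rw [inner_sub_right, real_inner_smul_right, real_inner_self_eq_norm_sq, hu]
      rw [one_pow, mul_one]
      linarith
    · show b ≤ ⟪u, (⟪u, z⟫ - a) • u⟫
      rw [real_inner_smul_right, real_inner_self_eq_norm_sq, hu]
      rw [one_pow, mul_one]
      linarith
  · intro α hα12 hα1 u hu z hz
    obtain ⟨z₁, hz₁, z₂, hz₂, rfl⟩ := Set.mem_add.mp hz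
    set U : Ω → ℝ := fun ω => ⟪u, X ω⟫ with hU
    set V : Ω → ℝ := fun ω => ⟪u, Y ω⟫ with hV
    have hmapeq : (fun ω => ⟪u, X ω + Y ω⟫) = fun ω => U ω + V ω := by
      funext ω; exact inner_add_right u (X ω) (Y ω)
    have hndUV : ∀ c : ℝ, μ {ω | U ω + V ω = c} < 1 := by
      intro c
      have hset : {ω | U ω + V ω = c} = {ω | ⟪u, X ω + Y ω⟫ = c} := by
        ext ω
        simp only [Set.mem_setOf_eq]
        rw [inner_add_right]
      rw [hset]
      exact hXYhyp u hu c
    have key := expectile_subadd μ (hinner_meas X hXmeas u) (hinner_meas Y hYmeas u)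
      (hinner_int X hXmeas hXmom u hu) (hinner_int Y hYmeas hYmom u hu)
      (hXhyp u hu) (hYhyp u hu) hndUV hα12 hα1
    show expectileQ (μ.map fun ω => ⟪u, X ω + Y ω⟫) α ≤ ⟪u, z₁ + z₂⟫
    rw [hmapeq, inner_add_right]
    have h1 : expectileQ (μ.map U) α ≤ ⟪u, z₁⟫ := hz₁
    have h2 : expectileQ (μ.map V) α ≤ ⟪u, z₂⟫ := hz₂
    linarith
end
end
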